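/- arXiv:2211.08869 — 2 statements merged into one kernel-verified Lean document; each statement's English description precedes it below -/
import Mathlib

section
/- Let G be a finite group with G = P ⋊ Q, where P is a nontrivial normal Sylow p-subgroup and Q is a nontrivial Sylow q-subgroup for distinct primes p and q, and Q is cyclic and acts irreducibly on P/Φ(P). Let R be the unique maximal subgroup of Q, and suppose R is normal in G. Then PR = P × R (that is, R centralises P and P ∩ R = 1), Φ(G) = Φ(P) × R, and Φ(G) equals the intersection of each pair of distinct maximal subgroups of G. -/
open Subgroup Pointwise

namespace NC

variable {G : Type*} [Group G]

/-- The centre of a subgroup `H`, realised as a subgroup of the ambient group `G`. -/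
def centerOf (H : Subgroup G) : Subgroup G := H ⊓ Subgroup.centralizer (H : Set G)

/-- `H` is a maximal subgroup of `K` (both subgroups of the ambient group `G`). -/
def IsMaximalIn (H K : Subgroup G) : Prop :=
  H < K ∧ ∀ T : Subgroup G, H < T → T ≤ K → T = K

/-- The non-commuting, non-generating graph of `G`: vertices `x, y` are adjacent
iff they do not commute and do not generate `G`.  (Central elements are isolated
vertices here; the paper simply removes them from the vertex set.) -/
def ncGraph (G : Type*) [Group G] : SimpleGraph G where
  Adj x y := x * y ≠ y * x ∧ Subgroup.closure {x, y} ≠ ⊤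
  symm := by
    constructor
    intro x y h
    exact ⟨fun e => h.1 e.symm, by rw [Set.pair_comm]; exact h.2⟩
  loopless := by
    constructor
    intro x h
    exact h.1 rfl

/-- The conjugate `g H g⁻¹` of a subgroup `H` by an element `g`. -/
def conjSub (g : G) (H : Subgroup G) : Subgroup G := H.map (MulAut.conj g).toMonoidHom

/-- "The quotient of `G` by the subgroup `H` is cyclic": every coset of `H` is a
power of a fixed coset.  For `H` normal this says exactly that `G/H` is cyclic. -/
def QuotCyclic (H : Subgroup G) : Prop := ∃ g : G, ∀ x : G, ∃ n : ℤ, x⁻¹ * g ^ n ∈ H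

/-- `P` is a Sylow `p`-subgroup of `G`. -/
def IsSylowIn (p : ℕ) (P : Subgroup G) : Prop :=
  IsPGroup p P ∧ ∀ R : Subgroup G, IsPGroup p R → P ≤ R → R = P

/-- The Frattini subgroup of a subgroup `P` (the intersection of the maximal
subgroups of `P`), realised as a subgroup of the ambient group. -/
def phiIn (P : Subgroup G) : Subgroup G := P ⊓ sInf {W : Subgroup G | IsMaximalIn W P}

/-- `G` has exactly two conjugacy classes of maximal subgroups. -/
def TwoMaxClasses (G : Type*) [Group G] : Prop :=
  ∃ K L : Subgroup G, IsCoatom K ∧ IsCoatom L ∧ (∀ g : G, conjSub g K ≠ L) ∧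
    ∀ T : Subgroup G, IsCoatom T → (∃ g : G, T = conjSub g K) ∨ (∃ g : G, T = conjSub g L)

/-- The induced subgraph of the non-commuting, non-generating graph on the
actual vertex set `G \ Z(G)`. -/
def ncSubgraph (G : Type*) [Group G] := (ncGraph G).induce {x : G | x ∉ Subgroup.center G}

lemma mem_conjSub {g x : G} {A : Subgroup G} : x ∈ conjSub g A ↔ g⁻¹ * x * g ∈ A := by
  constructor
  · rintro ⟨a, ha, rfl⟩
    simpa [mul_assoc] using ha
  · intro h
    exact ⟨g⁻¹ * x * g, h, by simp [mul_assoc]⟩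

lemma conjSub_one (A : Subgroup G) : conjSub 1 A = A := by
  ext x; simp [mem_conjSub]

lemma conjSub_conjSub (g h : G) (A : Subgroup G) :
    conjSub g (conjSub h A) = conjSub (g * h) A := by
  ext x; simp [mem_conjSub, mul_assoc]

lemma conjSub_inv_cancel (g : G) (A : Subgroup G) : conjSub g⁻¹ (conjSub g A) = A := by
  rw [conjSub_conjSub, inv_mul_cancel, conjSub_one]

lemma conjSub_cancel_inv (g : G) (A : Subgroup G) : conjSub g (conjSub g⁻¹ A) = A := by
  rw [conjSub_conjSub, mul_inv_cancel, conjSub_one]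

lemma conjSub_mono (g : G) {A B : Subgroup G} (h : A ≤ B) : conjSub g A ≤ conjSub g B :=
  Subgroup.map_mono h

lemma conjSub_lt (g : G) {A B : Subgroup G} (h : A < B) : conjSub g A < conjSub g B :=
  lt_of_le_of_ne (conjSub_mono g h.le) (fun e => h.ne (by
    have := congrArg (conjSub g⁻¹) e
    rwa [conjSub_inv_cancel, conjSub_inv_cancel] at this))

lemma conjSub_sup (g : G) (A B : Subgroup G) :
    conjSub g (A ⊔ B) = conjSub g A ⊔ conjSub g B := Subgroup.map_sup A B _

lemma conjSub_top (g : G) : conjSub g (⊤ : Subgroup G) = ⊤ := by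
  ext x; simp [mem_conjSub]

lemma conjSub_normal_eq {A : Subgroup G} (hA : A.Normal) (g : G) : conjSub g A = A := by
  ext x
  rw [mem_conjSub]
  constructor
  · intro h
    simpa [mul_assoc] using hA.conj_mem _ h g
  · intro h
    simpa [mul_assoc] using hA.conj_mem _ h g⁻¹

lemma conjSub_self_mem {A : Subgroup G} {g : G} (hg : g ∈ A) : conjSub g A = A := by
  ext x
  rw [mem_conjSub]
  constructor
  · intro h
    have := mul_mem (mul_mem hg h) (inv_mem hg)
    simpa [mul_assoc] using this
  · intro h
    exact mul_mem (mul_mem (inv_mem hg) h) hg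

lemma isMaximalIn_conj (g : G) {W K : Subgroup G} (h : IsMaximalIn W K) :
    IsMaximalIn (conjSub g W) (conjSub g K) := by
  refine ⟨conjSub_lt g h.1, fun T hT hTK => ?_⟩
  have h1 : W < conjSub g⁻¹ T := by
    have := conjSub_lt g⁻¹ hT
    rwa [conjSub_inv_cancel] at this
  have h2 : conjSub g⁻¹ T ≤ K := by
    have := conjSub_mono g⁻¹ hTK
    rwa [conjSub_inv_cancel] at this
  have := h.2 _ h1 h2
  have := congrArg (conjSub g) this
  rwa [conjSub_cancel_inv] at this

lemma isCoatom_conj (g : G) {K : Subgroup G} (h : IsCoatom K) : IsCoatom (conjSub g K) := by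
  constructor
  · intro e
    have := congrArg (conjSub g⁻¹) e
    rw [conjSub_inv_cancel, conjSub_top] at this
    exact h.1 this
  · intro b hb
    have h1 : K < conjSub g⁻¹ b := by
      have := conjSub_lt g⁻¹ hb
      rwa [conjSub_inv_cancel] at this
    have := h.2 _ h1
    have := congrArg (conjSub g) this
    rwa [conjSub_cancel_inv, conjSub_top] at this

lemma exists_maximalIn [Finite G] {W K : Subgroup G} (h : W < K) :
    ∃ T : Subgroup G, W ≤ T ∧ IsMaximalIn T K := by
  obtain ⟨T, hTS, hmax⟩ := Set.Finite.exists_maximalFor id {T : Subgroup G | W ≤ T ∧ T < K}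
    (Set.toFinite _) ⟨W, le_refl _, h⟩
  refine ⟨T, hTS.1, hTS.2, fun T' hTT' hT'K => ?_⟩
  rcases lt_or_eq_of_le hT'K with h' | h'
  · exact absurd (hmax ⟨hTS.1.trans hTT'.le, h'⟩ hTT'.le) (not_le_of_gt hTT')
  · exact h'

lemma phiIn_le {P : Subgroup G} : phiIn P ≤ P := inf_le_left

lemma phiIn_le_maximal {P W : Subgroup G} (h : IsMaximalIn W P) : phiIn P ≤ W :=
  inf_le_right.trans (sInf_le h)

lemma phiIn_lt [Finite G] {P : Subgroup G} (hP : P ≠ ⊥) : phiIn P < P := by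
  obtain ⟨T, _, hT⟩ := exists_maximalIn (bot_lt_iff_ne_bot.mpr hP)
  exact lt_of_le_of_lt (phiIn_le_maximal hT) hT.1

lemma phiIn_nongen [Finite G] {P W : Subgroup G} (hW : W ≤ P) (h : W ⊔ phiIn P = P) :
    W = P := by
  by_contra hne
  obtain ⟨T, hWT, hT⟩ := exists_maximalIn (lt_of_le_of_ne hW hne)
  have : W ⊔ phiIn P ≤ T := sup_le hWT (phiIn_le_maximal hT)
  rw [h] at this
  exact absurd this (not_le_of_gt hT.1)

lemma phiIn_normal {P : Subgroup G} (hPn : P.Normal) : (phiIn P).Normal := by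
  constructor
  intro n hn g
  refine ⟨hPn.conj_mem n hn.1 g, Subgroup.mem_sInf.mpr fun W hW => ?_⟩
  have hW' : IsMaximalIn (conjSub g⁻¹ W) P := by
    have := isMaximalIn_conj g⁻¹ hW
    rwa [conjSub_normal_eq hPn] at this
  have := Subgroup.mem_sInf.mp hn.2 _ hW'
  rw [mem_conjSub] at this
  simpa using this

lemma ded1 {N K T : Subgroup G} (hN : N.Normal) (hKT : K ≤ T) (hT : T ≤ N ⊔ K) :
    T = (T ⊓ N) ⊔ K := by
  refine le_antisymm ?_ (sup_le inf_le_left hKT)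
  intro t ht
  have h2 : t ∈ ((N : Set G) * (K : Set G)) := by
    rw [← Subgroup.normal_mul]; exact hT ht
  obtain ⟨y, hy, x, hx, hxy⟩ := h2
  have hyT : y ∈ T := by
    have hy' : y = t * x⁻¹ := by rw [← hxy]; group
    rw [hy']
    exact mul_mem ht (inv_mem (hKT hx))
  rw [← hxy]
  exact mul_mem (Subgroup.mem_sup_left ⟨hyT, hy⟩) (Subgroup.mem_sup_right hx)

lemma ded2 {N K T : Subgroup G} (hN : N.Normal) (hNT : N ≤ T) (hT : T ≤ K ⊔ N) :
    T = (T ⊓ K) ⊔ N := by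
  refine le_antisymm ?_ (sup_le inf_le_left hNT)
  intro t ht
  have h2 : t ∈ ((K : Set G) * (N : Set G)) := by
    rw [← Subgroup.mul_normal]; exact hT ht
  obtain ⟨x, hx, y, hy, hxy⟩ := h2
  have hxT : x ∈ T := by
    have hx' : x = t * y⁻¹ := by rw [← hxy]; group
    rw [hx']
    exact mul_mem ht (inv_mem (hNT hy))
  rw [← hxy]
  exact mul_mem (Subgroup.mem_sup_left ⟨hxT, hx⟩) (Subgroup.mem_sup_right hy)


/-- Theorem 3.2(ii)(c) / `thm:solmaxclass`. -/
theorem statement_9 {G : Type*} [Group G] [Finite G] {p q : ℕ}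
    (hp : p.Prime) (hq : q.Prime) (hpq : p ≠ q)
    {P Q : Subgroup G} (hPbot : P ≠ ⊥) (hQbot : Q ≠ ⊥) (hPn : P.Normal)
    (hPs : IsSylowIn p P) (hQs : IsSylowIn q Q)
    (hPQ : P ⊓ Q = ⊥) (hPQtop : P ⊔ Q = ⊤) (hQc : IsCyclic ↥Q)
    (hirr : ∀ W : Subgroup G, phiIn P ≤ W → W ≤ P →
      (∀ s ∈ Q, ∀ w ∈ W, s * w * s⁻¹ ∈ W) → W = phiIn P ∨ W = P)
    {R : Subgroup G} (hR : IsMaximalIn R Q)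
    (hRuniq : ∀ R' : Subgroup G, IsMaximalIn R' Q → R' = R) (hRn : R.Normal) :
    (∀ r ∈ R, ∀ x ∈ P, r * x = x * r) ∧ P ⊓ R = ⊥ ∧
      frattini G = phiIn P ⊔ R ∧
      (∀ K L : Subgroup G, IsCoatom K → IsCoatom L → K ≠ L → K ⊓ L = frattini G) := by
  classical
  have hFq : Fact q.Prime := ⟨hq⟩
  have hFp : Fact p.Prime := ⟨hp⟩
  set Φ := phiIn P with hPhidef
  have hPhiP : Φ ≤ P := phiIn_le
  have hPhin : Φ.Normal := phiIn_normal hPn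
  have hPhilt : Φ < P := phiIn_lt hPbot
  have hRQ : R ≤ Q := hR.1.le
  have hPR_bot : P ⊓ R = ⊥ := le_bot_iff.mp (hPQ ▸ inf_le_inf_left P hRQ)
  -- commuting
  have hcomm : ∀ r ∈ R, ∀ x ∈ P, r * x = x * r := by
    intro r hr x hx
    have h1 : r * x * r⁻¹ * x⁻¹ ∈ P := mul_mem (hPn.conj_mem x hx r) (inv_mem hx)
    have h2 : r * x * r⁻¹ * x⁻¹ ∈ R := by
      have h3 : x * r⁻¹ * x⁻¹ ∈ R := hRn.conj_mem _ (inv_mem hr) x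
      have h4 := mul_mem hr h3
      simpa [mul_assoc] using h4
    have h5 : r * x * r⁻¹ * x⁻¹ ∈ P ⊓ R := ⟨h1, h2⟩
    rw [hPR_bot, Subgroup.mem_bot] at h5
    calc r * x = (r * x * r⁻¹ * x⁻¹) * (x * r) := by group
      _ = x * r := by rw [h5, one_mul]
  -- conjugates of Q
  have hQ'pg : ∀ g : G, IsPGroup q ↥(conjSub g Q) := fun g => hQs.1.map _
  have hPQ' : ∀ g : G, P ⊓ conjSub g Q = ⊥ := fun g =>
    disjoint_iff.mp (IsPGroup.disjoint_of_ne p q hpq P (conjSub g Q) hPs.1 (hQ'pg g))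
  have hRQ' : ∀ g : G, R ≤ conjSub g Q := fun g => by
    have := conjSub_mono g hRQ
    rwa [conjSub_normal_eq hRn] at this
  have hmaxQ' : ∀ g : G, ∀ S : Subgroup G, S < conjSub g Q → S ≤ R := by
    intro g S hS
    obtain ⟨T, hST, hT⟩ := exists_maximalIn hS
    have hT' : IsMaximalIn (conjSub g⁻¹ T) Q := by
      have := isMaximalIn_conj g⁻¹ hT
      rwa [conjSub_inv_cancel] at this
    have h5 := hRuniq _ hT'
    have hTR : T = R := by
      have h6 := congrArg (conjSub g) h5
      rwa [conjSub_cancel_inv, conjSub_normal_eq hRn] at h6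
    exact hTR ▸ hST
  -- M0 := P ⊔ R
  have hM0Q' : ∀ g : G, (P ⊔ R) ⊓ conjSub g Q = R := by
    intro g
    have hRT : R ≤ (P ⊔ R) ⊓ conjSub g Q := le_inf le_sup_right (hRQ' g)
    have hded := ded2 hRn hRT (inf_le_left : (P ⊔ R) ⊓ conjSub g Q ≤ P ⊔ R)
    have hP2 : ((P ⊔ R) ⊓ conjSub g Q) ⊓ P ≤ ⊥ := by
      rw [← hPQ' g]
      exact le_inf inf_le_right (inf_le_left.trans inf_le_right)
    rw [hded, le_bot_iff.mp hP2, bot_sup_eq]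
  have hM0Q : (P ⊔ R) ⊓ Q = R := by
    have := hM0Q' 1
    rwa [conjSub_one] at this
  have hM0_ne_top : P ⊔ R ≠ ⊤ := by
    intro e
    have : Q = R := by rw [← hM0Q, e, top_inf_eq]
    exact hR.1.ne' this
  -- M1 g := Φ ⊔ conjSub g Q
  have hM1P : ∀ g : G, P ⊓ (Φ ⊔ conjSub g Q) = Φ := by
    intro g
    have hPhiT : Φ ≤ P ⊓ (Φ ⊔ conjSub g Q) := le_inf hPhiP le_sup_left
    have hded := ded2 hPhin hPhiT
      (inf_le_right.trans (sup_comm Φ (conjSub g Q)).le :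
        P ⊓ (Φ ⊔ conjSub g Q) ≤ conjSub g Q ⊔ Φ)
    have hP2 : (P ⊓ (Φ ⊔ conjSub g Q)) ⊓ conjSub g Q ≤ ⊥ := by
      rw [← hPQ' g]
      exact le_inf (inf_le_left.trans inf_le_left) inf_le_right
    rw [hded, le_bot_iff.mp hP2, bot_sup_eq]
  have hM1_ne_top : ∀ g : G, Φ ⊔ conjSub g Q ≠ ⊤ := by
    intro g e
    have : P = Φ := by rw [← hM1P g, e, inf_top_eq]
    exact hPhilt.ne' this
  have hM0M1 : ∀ g : G, (P ⊔ R) ⊓ (Φ ⊔ conjSub g Q) = Φ ⊔ R := by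
    intro g
    have hPhiT : Φ ≤ (P ⊔ R) ⊓ (Φ ⊔ conjSub g Q) :=
      le_inf (hPhiP.trans le_sup_left) le_sup_left
    have hded := ded2 hPhin hPhiT
      (inf_le_right.trans (sup_comm Φ (conjSub g Q)).le :
        (P ⊔ R) ⊓ (Φ ⊔ conjSub g Q) ≤ conjSub g Q ⊔ Φ)
    have h7 : ((P ⊔ R) ⊓ (Φ ⊔ conjSub g Q)) ⊓ conjSub g Q = R := by
      rw [inf_assoc, inf_of_le_right (le_sup_right : conjSub g Q ≤ Φ ⊔ conjSub g Q)]
      exact hM0Q' g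
    rw [hded, h7, sup_comm]
  -- coatoms
  have hM0coatom : IsCoatom (P ⊔ R) := by
    refine ⟨hM0_ne_top, fun T hT => ?_⟩
    have hPT : P ≤ T := le_sup_left.trans hT.le
    by_cases hTQ : Q ≤ T
    · rw [← top_le_iff, ← hPQtop]
      exact sup_le hPT hTQ
    · exfalso
      have hTQlt : T ⊓ Q < Q := lt_of_le_of_ne inf_le_right (fun e => hTQ (e ▸ inf_le_left))
      have hTQR : T ⊓ Q ≤ R := by
        have h8 := hmaxQ' 1 (T ⊓ Q)
        rw [conjSub_one] at h8
        exact h8 hTQlt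
      have hded := ded2 hPn hPT
        ((sup_comm P Q ▸ hPQtop : Q ⊔ P = ⊤) ▸ le_top : T ≤ Q ⊔ P)
      have : T ≤ P ⊔ R := by
        rw [hded]
        exact sup_le (hTQR.trans le_sup_right) le_sup_left
      exact absurd this (not_le_of_gt hT)
  have hQle : ∀ M : Subgroup G, IsCoatom M → Q ≤ M → M = Φ ⊔ Q := by
    intro M hM hQM
    have hWle : (M ⊓ P) ⊔ Φ ≤ P := sup_le inf_le_right hPhiP
    have hinv : ∀ s ∈ Q, ∀ w ∈ (M ⊓ P) ⊔ Φ, s * w * s⁻¹ ∈ (M ⊓ P) ⊔ Φ := by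
      intro s hs w hw
      have hconj : conjSub s ((M ⊓ P) ⊔ Φ) ≤ (M ⊓ P) ⊔ Φ := by
        rw [conjSub_sup]
        refine sup_le (le_trans ?_ le_sup_left)
          ((le_of_eq (conjSub_normal_eq hPhin s)).trans le_sup_right)
        refine le_inf ?_ ?_
        · intro x hx
          rw [mem_conjSub] at hx
          have h9 := mul_mem (mul_mem (hQM hs) hx.1) (inv_mem (hQM hs))
          simpa [mul_assoc] using h9
        · intro x hx
          rw [mem_conjSub] at hx
          have h9 := hPn.conj_mem _ hx.2 s
          simpa [mul_assoc] using h9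
      refine hconj (mem_conjSub.mpr ?_)
      rw [show s⁻¹ * (s * w * s⁻¹) * s = w by group]
      exact hw
    rcases hirr _ le_sup_right hWle hinv with hW | hW
    · have hMP : M ⊓ P ≤ Φ := le_sup_left.trans hW.le
      have hded := ded1 hPn hQM (hPQtop ▸ le_top : M ≤ P ⊔ Q)
      have hle : M ≤ Φ ⊔ Q := by
        rw [hded]
        exact sup_le (hMP.trans le_sup_left) le_sup_right
      rcases lt_or_eq_of_le hle with h' | h'
      · exfalso
        have h10 := hM.2 _ h'
        have h9 := hM1_ne_top 1
        rw [conjSub_one] at h9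
        exact h9 h10
      · exact h'
    · exfalso
      have hMPP : M ⊓ P = P := phiIn_nongen inf_le_right hW
      have hPM : P ≤ M := hMPP ▸ inf_le_left
      exact hM.1 (top_le_iff.mp (hPQtop ▸ sup_le hPM hQM))
  have hM1coatom1 : IsCoatom (Φ ⊔ Q) := by
    have hne : Φ ⊔ Q ≠ ⊤ := by
      have := hM1_ne_top 1; rwa [conjSub_one] at this
    refine ⟨hne, fun T hT => ?_⟩
    have hQT : Q ≤ T := le_sup_right.trans hT.le
    have hWle : (T ⊓ P) ⊔ Φ ≤ P := sup_le inf_le_right hPhiP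
    have hinv : ∀ s ∈ Q, ∀ w ∈ (T ⊓ P) ⊔ Φ, s * w * s⁻¹ ∈ (T ⊓ P) ⊔ Φ := by
      intro s hs w hw
      have hconj : conjSub s ((T ⊓ P) ⊔ Φ) ≤ (T ⊓ P) ⊔ Φ := by
        rw [conjSub_sup]
        refine sup_le (le_trans ?_ le_sup_left)
          ((le_of_eq (conjSub_normal_eq hPhin s)).trans le_sup_right)
        refine le_inf ?_ ?_
        · intro x hx
          rw [mem_conjSub] at hx
          have h9 := mul_mem (mul_mem (hQT hs) hx.1) (inv_mem (hQT hs))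
          simpa [mul_assoc] using h9
        · intro x hx
          rw [mem_conjSub] at hx
          have h9 := hPn.conj_mem _ hx.2 s
          simpa [mul_assoc] using h9
      refine hconj (mem_conjSub.mpr ?_)
      rw [show s⁻¹ * (s * w * s⁻¹) * s = w by group]
      exact hw
    rcases hirr _ le_sup_right hWle hinv with hW | hW
    · exfalso
      have hTP : T ⊓ P ≤ Φ := le_sup_left.trans hW.le
      have hded := ded1 hPn hQT (hPQtop ▸ le_top : T ≤ P ⊔ Q)
      have : T ≤ Φ ⊔ Q := by
        rw [hded]
        exact sup_le (hTP.trans le_sup_left) le_sup_right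
      exact absurd this (not_le_of_gt hT)
    · have hTPP : T ⊓ P = P := phiIn_nongen inf_le_right hW
      have hPT : P ≤ T := hTPP ▸ inf_le_left
      rw [← top_le_iff, ← hPQtop]
      exact sup_le hPT hQT
  have hM1coatom : ∀ g : G, IsCoatom (Φ ⊔ conjSub g Q) := by
    intro g
    have he : Φ ⊔ conjSub g Q = conjSub g (Φ ⊔ Q) := by
      rw [conjSub_sup, conjSub_normal_eq hPhin]
    rw [he]
    exact isCoatom_conj g hM1coatom1
  -- classification of coatoms
  have hclass : ∀ M : Subgroup G, IsCoatom M → M = P ⊔ R ∨ ∃ g : G, M = Φ ⊔ conjSub g Q := by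
    intro M hM
    by_cases hPM : P ≤ M
    · left
      have hMQ : M ⊓ Q ≠ Q := by
        intro e
        exact hM.1 (top_le_iff.mp (hPQtop ▸ sup_le hPM (e ▸ inf_le_left)))
      have hMQlt : M ⊓ Q < Q := lt_of_le_of_ne inf_le_right hMQ
      have hMQR : M ⊓ Q ≤ R := by
        have h8 := hmaxQ' 1 (M ⊓ Q)
        rw [conjSub_one] at h8
        exact h8 hMQlt
      have hded := ded2 hPn hPM
        ((sup_comm P Q ▸ hPQtop : Q ⊔ P = ⊤) ▸ le_top : M ≤ Q ⊔ P)
      have hle : M ≤ P ⊔ R := by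
        rw [hded]
        exact sup_le (hMQR.trans le_sup_right) le_sup_left
      rcases lt_or_eq_of_le hle with h' | h'
      · exact absurd (hM.2 _ h') hM0_ne_top
      · exact h'
    · right
      have hMP_top : M ⊔ P = ⊤ := by
        rcases lt_or_eq_of_le (le_sup_left : M ≤ M ⊔ P) with h' | h'
        · exact hM.2 _ h'
        · exact absurd (h' ▸ le_sup_right : P ≤ M) hPM
      -- q does not divide the index of M
      have hindex : ¬ q ∣ M.index := by
        have hbij : Function.Bijective
            (Quotient.map' (Subtype.val)
              (fun a b hab => by
                rw [QuotientGroup.leftRel_apply] at hab ⊢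
                simpa [Subgroup.mem_subgroupOf] using hab) :
              ↥P ⧸ (M.subgroupOf P) → G ⧸ M) := by
          constructor
          · intro a b hab
            induction a using Quotient.inductionOn'
            induction b using Quotient.inductionOn'
            rename_i a b
            simp only [Quotient.map'_mk''] at hab
            rw [Quotient.eq''] at hab ⊢
            rw [QuotientGroup.leftRel_apply] at hab ⊢
            simpa [Subgroup.mem_subgroupOf] using hab
          · intro x
            induction x using Quotient.inductionOn'
            rename_i g
            have hg : g ∈ ((P : Set G) * (M : Set G)) := by
              rw [← Subgroup.normal_mul, sup_comm, hMP_top]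
              trivial
            obtain ⟨y, hy, m, hm, hym⟩ := hg
            refine ⟨Quotient.mk'' ⟨y, hy⟩, ?_⟩
            simp only [Quotient.map'_mk'']
            rw [Quotient.eq'', QuotientGroup.leftRel_apply]
            rw [← hym]
            simpa using hm
        have hcard : M.index = (M.subgroupOf P).index :=
          (Nat.card_eq_of_bijective _ hbij).symm
        have hdvd : (M.subgroupOf P).index ∣ Nat.card ↥P := Subgroup.index_dvd_card _
        obtain ⟨n, hn⟩ := hPs.1.exists_card_eq
        intro hqd
        rw [hcard] at hqd
        have hqpn : q ∣ p ^ n := hn ▸ hqd.trans hdvd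
        exact hpq ((Nat.prime_dvd_prime_iff_eq hq hp).mp (hq.dvd_of_dvd_pow hqpn)).symm
      -- fixed point: some conjugate of Q lies in M
      obtain ⟨x, hx⟩ := hQs.1.nonempty_fixed_point_of_prime_not_dvd_card (G ⧸ M) hindex
      obtain ⟨g, rfl⟩ := QuotientGroup.mk_surjective x
      have hQM : conjSub g⁻¹ Q ≤ M := by
        intro y hy
        rw [mem_conjSub, inv_inv] at hy
        have hfix := (MulAction.mem_fixedPoints.mp hx) (⟨g * y * g⁻¹, hy⟩ : ↥Q)
        change (((g * y * g⁻¹) * g : G) : G ⧸ M) = ((g : G) : G ⧸ M) at hfix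
        have hfix2 : (((g * y * g⁻¹) * g : G) : G ⧸ M) = ((g : G) : G ⧸ M) := hfix
        rw [QuotientGroup.eq] at hfix2
        have : y⁻¹ ∈ M := by simpa [mul_assoc] using hfix2
        simpa using inv_mem this
      refine ⟨g⁻¹, ?_⟩
      have hM' : IsCoatom (conjSub g M) := isCoatom_conj g hM
      have hQM' : Q ≤ conjSub g M := by
        have := conjSub_mono g hQM
        rwa [conjSub_cancel_inv] at this
      have h11 := hQle _ hM' hQM'
      have h8 := congrArg (conjSub g⁻¹) h11
      rw [conjSub_inv_cancel, conjSub_sup, conjSub_normal_eq hPhin] at h8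
      exact h8
  -- intersections of two conjugate-type coatoms
  have hCC : ∀ g h : G, Φ ⊔ conjSub g Q ≠ Φ ⊔ conjSub h Q →
      (Φ ⊔ conjSub g Q) ⊓ (Φ ⊔ conjSub h Q) = Φ ⊔ R := by
    intro g h hne
    set X := (Φ ⊔ conjSub g Q) ⊓ (Φ ⊔ conjSub h Q) with hXdef
    have hPhiX : Φ ≤ X := le_inf le_sup_left le_sup_left
    have hded := ded2 hPhin hPhiX
      ((inf_le_left : X ≤ Φ ⊔ conjSub g Q).trans (sup_comm Φ (conjSub g Q)).le :
        X ≤ conjSub g Q ⊔ Φ)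
    by_cases hS : X ⊓ conjSub g Q = conjSub g Q
    · exfalso
      have hQ'X : conjSub g Q ≤ X := hS ▸ inf_le_left
      have hle2 : Φ ⊔ conjSub g Q ≤ Φ ⊔ conjSub h Q :=
        sup_le le_sup_left (hQ'X.trans inf_le_right)
      rcases lt_or_eq_of_le hle2 with h' | h'
      · exact hM1_ne_top h ((hM1coatom g).2 _ h')
      · exact hne h'
    · have hSlt : X ⊓ conjSub g Q < conjSub g Q := lt_of_le_of_ne inf_le_right hS
      have hSR : X ⊓ conjSub g Q ≤ R := hmaxQ' g _ hSlt
      refine le_antisymm ?_ (le_inf (sup_le le_sup_left ((hRQ' g).trans le_sup_right))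
        (sup_le le_sup_left ((hRQ' h).trans le_sup_right)))
      rw [hded, sup_comm]
      exact sup_le le_sup_left (hSR.trans le_sup_right)
  -- Frattini
  have hfr : frattini G = Φ ⊔ R := by
    refine le_antisymm ?_ ?_
    · have h1 : frattini G ≤ P ⊔ R := frattini_le_coatom hM0coatom
      have h2 : frattini G ≤ Φ ⊔ conjSub 1 Q := frattini_le_coatom (hM1coatom 1)
      have h3 := le_inf h1 h2
      rwa [hM0M1 1] at h3
    · show Φ ⊔ R ≤ ⨅ a ∈ {H : Subgroup G | IsCoatom H}, a
      refine le_iInf₂ fun M hM => ?_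
      rcases hclass M hM with h' | ⟨g, h'⟩
      · rw [h']
        exact sup_le (hPhiP.trans le_sup_left) le_sup_right
      · rw [h']
        exact sup_le le_sup_left ((hRQ' g).trans le_sup_right)
  refine ⟨hcomm, hPR_bot, hfr, ?_⟩
  intro K L hK hL hKL
  rw [hfr]
  rcases hclass K hK with hK' | ⟨g, hK'⟩ <;> rcases hclass L hL with hL' | ⟨h, hL'⟩
  · exact absurd (hK'.trans hL'.symm) hKL
  · rw [hK', hL']
    exact hM0M1 h
  · rw [hK', hL', inf_comm]
    exact hM0M1 g
  · rw [hK', hL']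
    exact hCC g h (fun e => hKL (hK'.trans (e.trans hL'.symm)))

end NC
end

section
/- Let G be a group containing a normal, non-abelian maximal subgroup M with Z(G) properly contained in Z(M). Let x ∈ M \ Z(M) and z ∈ Z(M) \ Z(G), and let 𝒥 be the set of maximal subgroups of G distinct from M. If the subgroups I ∩ M, for I ranging over some subset ℐ of 𝒥, together generate M, then there exists I ∈ 𝒥 such that x does not centralise I ∩ M. More generally, if there exists I ∈ 𝒥 such that x does not centralise I ∩ M, then the distance d(x,z) in the non-commuting, non-generating graph nc(G) is at most 3. -/
open Subgroup

namespace NC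

variable {G : Type*} [Group G]

section Aux

variable {G : Type*} [Group G]

lemma centerOf_normal {M : Subgroup G} (hMn : M.Normal) : (centerOf M).Normal := by
  constructor
  intro n hn g
  simp only [centerOf, Subgroup.mem_inf, Subgroup.mem_centralizer_iff] at hn ⊢
  refine ⟨hMn.conj_mem n hn.1 g, ?_⟩
  intro m hm
  have hm' : g⁻¹ * m * g ∈ M := by
    have := hMn.conj_mem m hm g⁻¹
    simpa [mul_assoc] using this
  have h2 := hn.2 _ hm'
  calc m * (g * n * g⁻¹) = g * ((g⁻¹ * m * g) * n) * g⁻¹ := by group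
    _ = g * (n * (g⁻¹ * m * g)) * g⁻¹ := by rw [h2]
    _ = (g * n * g⁻¹) * m := by group

/-- Key lemma: `z ∈ Z(M)` with `M` normal non-abelian implies `⟨z,u⟩ ≠ G`. -/
lemma closure_pair_center_ne_top {M : Subgroup G} (hMn : M.Normal)
    (hMna : ∃ a ∈ M, ∃ b ∈ M, a * b ≠ b * a) {z : G} (hz : z ∈ centerOf M) (u : G) :
    Subgroup.closure {z, u} ≠ ⊤ := by
  intro htop
  haveI : (centerOf M).Normal := centerOf_normal hMn
  set Z := centerOf M with hZdef
  have hZM : Z ≤ M := inf_le_left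
  let mk := QuotientGroup.mk' Z
  have hsurj : Function.Surjective mk := QuotientGroup.mk'_surjective Z
  have hmap : (Subgroup.closure {z, u}).map mk = ⊤ := by
    rw [htop]
    exact Subgroup.map_top_of_surjective _ hsurj
  rw [MonoidHom.map_closure, Set.image_pair] at hmap
  have hz1 : mk z = 1 := (QuotientGroup.eq_one_iff z).mpr hz
  rw [hz1] at hmap
  have hmap' : Subgroup.closure {mk u} = ⊤ := by
    rw [← hmap]
    apply le_antisymm
    · exact Subgroup.closure_mono (Set.subset_insert _ _)
    · rw [Subgroup.closure_le]
      rintro t (rfl | rfl)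
      · exact Subgroup.one_mem _
      · exact Subgroup.subset_closure rfl
  have key : ∀ a : G, ∃ n : ℤ, ∃ c ∈ Z, u ^ n * c = a := by
    intro a
    have : mk a ∈ Subgroup.closure {mk u} := by rw [hmap']; trivial
    rw [Subgroup.mem_closure_singleton] at this
    obtain ⟨n, hn⟩ := this
    have hn' : mk (u ^ n) = mk a := by
      rw [map_zpow]; exact hn
    rw [QuotientGroup.mk'_eq_mk'] at hn'
    obtain ⟨c, hc, hac⟩ := hn'
    exact ⟨n, c, hc, hac⟩
  obtain ⟨a, ha, b, hb, hab⟩ := hMna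
  apply hab
  obtain ⟨n, c, hc, hac⟩ := key a
  obtain ⟨m, d, hd, hbd⟩ := key b
  have hcC : ∀ w ∈ M, w * c = c * w := by
    have := (Subgroup.mem_inf.mp hc).2
    exact fun w hw => Subgroup.mem_centralizer_iff.mp this w hw
  have hdC : ∀ w ∈ M, w * d = d * w := by
    have := (Subgroup.mem_inf.mp hd).2
    exact fun w hw => Subgroup.mem_centralizer_iff.mp this w hw
  have hun : u ^ n ∈ M := by
    have : u ^ n = a * c⁻¹ := by rw [← hac]; group
    rw [this]; exact M.mul_mem ha (M.inv_mem (hZM hc))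
  have hum : u ^ m ∈ M := by
    have : u ^ m = b * d⁻¹ := by rw [← hbd]; group
    rw [this]; exact M.mul_mem hb (M.inv_mem (hZM hd))
  have hcum : c * u ^ m = u ^ m * c := (hcC _ hum).symm
  have hdun : u ^ n * d = d * u ^ n := hdC _ hun
  have hcd : c * d = d * c := by
    have := hcC _ (hZM hd)
    exact this.symm
  calc a * b = u ^ n * c * (u ^ m * d) := by rw [hac, hbd]
    _ = u ^ n * (c * u ^ m) * d := by group
    _ = u ^ n * (u ^ m * c) * d := by rw [hcum]
    _ = u ^ n * u ^ m * (c * d) := by group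
    _ = u ^ m * u ^ n * (d * c) := by rw [hcd, ← zpow_add, ← zpow_add, add_comm]
    _ = u ^ m * (u ^ n * d) * c := by group
    _ = u ^ m * (d * u ^ n) * c := by rw [hdun]
    _ = u ^ m * d * (u ^ n * c) := by group
    _ = b * a := by rw [hac, hbd]

end Aux

/-- Lemma 4.3 / `lem:maxsubgendist`. -/
theorem statement_11 {M : Subgroup G} (hM : IsCoatom M) (hMn : M.Normal)
    (hMna : ∃ a ∈ M, ∃ b ∈ M, a * b ≠ b * a)
    (hZ : Subgroup.center G < centerOf M)
    {x z : G} (hx : x ∈ M) (hxZ : x ∉ centerOf M)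
    (hz : z ∈ centerOf M) (hzZ : z ∉ Subgroup.center G) :
    (∀ I : Set (Subgroup G), (∀ I' ∈ I, IsCoatom I' ∧ I' ≠ M) →
        (⨆ I' ∈ I, I' ⊓ M) = M →
        ∃ J : Subgroup G, IsCoatom J ∧ J ≠ M ∧ ∃ w ∈ J ⊓ M, x * w ≠ w * x) ∧
      ((∃ J : Subgroup G, IsCoatom J ∧ J ≠ M ∧ ∃ w ∈ J ⊓ M, x * w ≠ w * x) →
        (ncGraph G).Reachable x z ∧ (ncGraph G).dist x z ≤ 3) := by
  simp only [centerOf, Subgroup.mem_inf, Subgroup.mem_centralizer_iff] at hz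
  obtain ⟨hzM, hzC⟩ := hz
  constructor
  · intro I hI hsup
    by_contra hcon
    push_neg at hcon
    apply hxZ
    have hMcen : M ≤ Subgroup.centralizer {x} := by
      rw [← hsup]
      apply iSup_le
      intro I'
      apply iSup_le
      intro hI'
      intro g hg
      rw [Subgroup.mem_centralizer_iff]
      rintro h rfl
      exact hcon I' (hI I' hI').1 (hI I' hI').2 g hg
    simp only [centerOf, Subgroup.mem_inf, Subgroup.mem_centralizer_iff]
    refine ⟨hx, fun m hm => ?_⟩
    exact (Subgroup.mem_centralizer_iff.mp (hMcen hm) x (Set.mem_singleton x)).symm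
  · rintro ⟨J, hJ, hJne, w, hwJM, hxw⟩
    obtain ⟨hwJ, hwM⟩ := Subgroup.mem_inf.mp hwJM
    -- J is not contained in M
    have hJM : ¬ J ≤ M := by
      intro hle
      exact hM.1 (hJ.2 M (lt_of_le_of_ne hle hJne))
    -- z does not centralize J
    have hvex : ∃ v ∈ J, z * v ≠ v * z := by
      by_contra hcon
      push_neg at hcon
      apply hzZ
      obtain ⟨y, hyJ, hyM⟩ := SetLike.not_le_iff_exists.mp hJM
      have hTtop : Subgroup.closure ((M : Set G) ∪ (J : Set G)) = ⊤ := by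
        apply hM.2
        refine lt_of_le_of_ne (fun t ht => Subgroup.subset_closure (Or.inl ht)) ?_
        intro hMeq
        apply hyM
        rw [hMeq]
        exact Subgroup.subset_closure (Or.inr hyJ)
      have hcen : Subgroup.closure ((M : Set G) ∪ (J : Set G)) ≤ Subgroup.centralizer {z} := by
        rw [Subgroup.closure_le]
        rintro t (ht | ht) <;> rw [SetLike.mem_coe, Subgroup.mem_centralizer_iff] <;>
          rintro h rfl
        · exact (hzC t ht).symm
        · exact hcon t ht
      rw [Subgroup.mem_center_iff]
      intro g
      have hg : g ∈ Subgroup.centralizer {z} := hcen (hTtop ▸ Subgroup.mem_top g)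
      exact (Subgroup.mem_centralizer_iff.mp hg z (Set.mem_singleton z)).symm
    have hxz : x * z = z * x := hzC x hx
    have hwz : w * z = z * w := hzC w hwM
    by_cases hcase : ∃ u ∈ J, w * u ≠ u * w ∧ z * u ≠ u * z
    · -- Case 1: path x — w — u — z
      obtain ⟨u, huJ, hwu, hzu⟩ := hcase
      have e1 : (ncGraph G).Adj x w := by
        refine ⟨hxw, ?_⟩
        intro htop
        apply hM.1
        apply top_unique
        rw [← htop, Subgroup.closure_le]
        rintro t (rfl | rfl) <;> [exact hx; exact hwM]
      have e2 : (ncGraph G).Adj w u := by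
        refine ⟨hwu, ?_⟩
        intro htop
        apply hJ.1
        apply top_unique
        rw [← htop, Subgroup.closure_le]
        rintro t (rfl | rfl) <;> [exact hwJ; exact huJ]
      have e3 : (ncGraph G).Adj u z := by
        refine ⟨fun h => hzu h.symm, ?_⟩
        rw [Set.pair_comm]
        exact closure_pair_center_ne_top hMn hMna
          (by simp only [centerOf, Subgroup.mem_inf, Subgroup.mem_centralizer_iff]
              exact ⟨hzM, hzC⟩) u
      let walk : (ncGraph G).Walk x z :=
        SimpleGraph.Walk.cons e1 (SimpleGraph.Walk.cons e2 (SimpleGraph.Walk.cons e3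
          SimpleGraph.Walk.nil))
      refine ⟨⟨walk⟩, le_trans (SimpleGraph.dist_le walk) (by simp [walk])⟩
    · -- Case 2: w centralizes J, and z ∈ J; path x — w*z — v — z
      push_neg at hcase
      obtain ⟨v, hvJ, hzv⟩ := hvex
      have hwv : w * v = v * w := by
        by_contra h
        exact hzv (hcase v hvJ h)
      have hwJc : ∀ u ∈ J, w * u = u * w := by
        intro u huJ
        by_cases h : w * u = u * w
        · exact h
        · exfalso
          have hzucomm : z * u = u * z := hcase u huJ h
          have huvJ : u * v ∈ J := J.mul_mem huJ hvJ
          by_cases h2 : w * (u * v) = (u * v) * w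
          · apply h
            have : (w * u) * v = (u * w) * v := by
              calc (w * u) * v = w * (u * v) := by group
                _ = (u * v) * w := h2
                _ = u * (v * w) := by group
                _ = u * (w * v) := by rw [hwv]
                _ = (u * w) * v := by group
            exact mul_right_cancel this
          · have hzuv : z * (u * v) = (u * v) * z := hcase _ huvJ h2
            apply hzv
            have : u * (z * v) = u * (v * z) := by
              calc u * (z * v) = (u * z) * v := by group
                _ = (z * u) * v := by rw [hzucomm]
                _ = z * (u * v) := by group
                _ = (u * v) * z := hzuv
                _ = u * (v * z) := by group
            exact mul_left_cancel this
      have hzJ : z ∈ J := by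
        by_contra hzJ
        apply hxw
        have hTtop : Subgroup.closure ((J : Set G) ∪ {z}) = ⊤ := by
          apply hJ.2
          refine lt_of_le_of_ne (fun t ht => Subgroup.subset_closure (Or.inl ht)) ?_
          intro hJeq
          apply hzJ
          rw [hJeq]
          exact Subgroup.subset_closure (Or.inr rfl)
        have hcen : Subgroup.closure ((J : Set G) ∪ {z}) ≤ Subgroup.centralizer {w} := by
          rw [Subgroup.closure_le]
          rintro t (ht | rfl) <;> rw [SetLike.mem_coe, Subgroup.mem_centralizer_iff] <;>
            rintro h rfl
          · exact hwJc t ht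
          · exact hwz
        have hxc : x ∈ Subgroup.centralizer {w} := hcen (hTtop ▸ Subgroup.mem_top x)
        exact (Subgroup.mem_centralizer_iff.mp hxc w (Set.mem_singleton w)).symm
      have hzMJ : z ∈ M := hzM
      have e1 : (ncGraph G).Adj x (w * z) := by
        refine ⟨?_, ?_⟩
        · intro heq
          apply hxw
          have : (x * w) * z = (w * x) * z := by
            calc (x * w) * z = x * (w * z) := by group
              _ = (w * z) * x := heq
              _ = w * (z * x) := by group
              _ = w * (x * z) := by rw [← hxz]
              _ = (w * x) * z := by group
          exact mul_right_cancel this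
        · intro htop
          apply hM.1
          apply top_unique
          rw [← htop, Subgroup.closure_le]
          rintro t (rfl | rfl)
          · exact hx
          · exact M.mul_mem hwM hzMJ
      have e2 : (ncGraph G).Adj (w * z) v := by
        refine ⟨?_, ?_⟩
        · intro heq
          apply hzv
          have : w * (z * v) = w * (v * z) := by
            calc w * (z * v) = (w * z) * v := by group
              _ = v * (w * z) := heq
              _ = (v * w) * z := by group
              _ = (w * v) * z := by rw [← hwv]
              _ = w * (v * z) := by group
          exact mul_left_cancel this
        · intro htop
          apply hJ.1
          apply top_unique
          rw [← htop, Subgroup.closure_le]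
          rintro t (rfl | rfl)
          · exact J.mul_mem hwJ hzJ
          · exact hvJ
      have e3 : (ncGraph G).Adj v z := by
        refine ⟨fun h => hzv h.symm, ?_⟩
        intro htop
        apply hJ.1
        apply top_unique
        rw [← htop, Subgroup.closure_le]
        rintro t (rfl | rfl) <;> [exact hvJ; exact hzJ]
      let walk : (ncGraph G).Walk x z :=
        SimpleGraph.Walk.cons e1 (SimpleGraph.Walk.cons e2 (SimpleGraph.Walk.cons e3
          SimpleGraph.Walk.nil))
      refine ⟨⟨walk⟩, le_trans (SimpleGraph.dist_le walk) (by simp [walk])⟩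


end NC
end
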